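/- arXiv:1904.10585 — 3 statements merged into one kernel-verified Lean document; each statement's English description precedes it below -/
import Mathlib

section
/- For every ε > 0 and every positive integer d, the Chebyshev polynomial of the first kind satisfies T_d(1+ε) ≥ 2^(d·min{√ε, 1} − 1). -/
open Polynomial Chebyshev Real

lemma T_complex_cosh (s : ℂ) (n : ℤ) :
    (Polynomial.Chebyshev.T ℂ n).eval (Complex.cosh s) = Complex.cosh (n * s) := by
  have h := Polynomial.Chebyshev.T_complex_cos (s * Complex.I) n
  rw [Complex.cos_mul_I] at h
  rw [h, ← mul_assoc, Complex.cos_mul_I]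

lemma T_real_cosh (s : ℝ) (n : ℤ) :
    (Polynomial.Chebyshev.T ℝ n).eval (Real.cosh s) = Real.cosh (n * s) := by
  have h := _root_.T_complex_cosh (s : ℂ) n
  rw [← Complex.ofReal_cosh] at h
  have hmap : (Polynomial.Chebyshev.T ℂ n) = (Polynomial.Chebyshev.T ℝ n).map
      (algebraMap ℝ ℂ) := (Polynomial.Chebyshev.map_T _ n).symm
  rw [hmap, Polynomial.eval_map, show ((Real.cosh s : ℂ)) = algebraMap ℝ ℂ (Real.cosh s) from rfl, Polynomial.eval₂_at_apply] at h
  have : ((n : ℂ) * (s : ℂ)) = ((n * s : ℝ) : ℂ) := by push_cast; ring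
  rw [this, ← Complex.ofReal_cosh] at h
  exact Complex.ofReal_injective h

/-- For every `ε > 0` and positive integer `d`, the Chebyshev polynomial of the first
kind satisfies `T_d(1+ε) ≥ 2^(d·min{√ε, 1} − 1)`. -/
theorem chebyshev_lower_bound (ε : ℝ) (hε : 0 < ε) (d : ℕ) (hd : 0 < d) :
    (Polynomial.Chebyshev.T ℝ d).eval (1 + ε) ≥
      (2 : ℝ) ^ ((d : ℝ) * min (Real.sqrt ε) 1 - 1) := by
  set t : ℝ := 1 + ε with ht
  set m : ℝ := min (Real.sqrt ε) 1 with hm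
  have hm0 : 0 ≤ m := le_min (Real.sqrt_nonneg _) zero_le_one
  have hm1 : m ≤ 1 := min_le_right _ _
  have hsq : t ^ 2 - 1 = ε * (ε + 2) := by ring
  have hsqnn : 0 ≤ t ^ 2 - 1 := by rw [hsq]; positivity
  set r : ℝ := Real.sqrt (t ^ 2 - 1) with hr
  have hr0 : 0 ≤ r := Real.sqrt_nonneg _
  set u : ℝ := t + r with hu
  have hu1 : 1 < u := by
    have : (1:ℝ) < t := by simp [ht]; linarith
    have := hr0; simp only [hu]; linarith
  have hu0 : 0 < u := by linarith
  have hinv : (t - r) * u = 1 := by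
    have : r ^ 2 = t ^ 2 - 1 := Real.sq_sqrt hsqnn
    simp only [hu]; nlinarith
  set s : ℝ := Real.log u with hs
  have hes : Real.exp s = u := Real.exp_log hu0
  have hens : Real.exp (-s) = t - r := by
    rw [Real.exp_neg, hes]
    field_simp
    linarith [hinv]
  have hcosh : Real.cosh s = t := by
    rw [Real.cosh_eq, hes, hens]; ring
  -- key evaluation
  have hT : (Polynomial.Chebyshev.T ℝ d).eval t = Real.cosh (d * s) := by
    have := _root_.T_real_cosh s (d : ℤ)
    rw [hcosh] at this
    push_cast at this ⊢
    exact this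
  rw [hT]
  -- 2^m ≤ 1 + m ≤ u
  have h2m : (2:ℝ) ^ m ≤ 1 + m := by
    have hc := convexOn_exp.2 (Set.mem_univ (0:ℝ)) (Set.mem_univ (Real.log 2))
      (by linarith : (0:ℝ) ≤ 1 - m) hm0 (by ring)
    simp only [smul_eq_mul, mul_zero, zero_add, Real.exp_zero] at hc
    rw [Real.exp_log (by norm_num : (0:ℝ) < 2)] at hc
    have : (2:ℝ) ^ m = Real.exp (m * Real.log 2) := by
      rw [Real.rpow_def_of_pos (by norm_num), mul_comm]
    rw [this]
    calc Real.exp (m * Real.log 2) ≤ (1 - m) * 1 + m * 2 := hc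
      _ = 1 + m := by ring
  have hmu : (2:ℝ) ^ m ≤ u := by
    have h1 : m ≤ Real.sqrt ε := min_le_left _ _
    have h2 : Real.sqrt ε ≤ r := by
      apply Real.sqrt_le_sqrt; rw [hsq]; nlinarith
    have : 1 + m ≤ u := by simp only [hu, ht]; linarith
    linarith
  -- conclude
  have hrhs : (2:ℝ) ^ ((d : ℝ) * m - 1) = ((2:ℝ) ^ m) ^ d / 2 := by
    rw [Real.rpow_sub (by norm_num), Real.rpow_one, mul_comm,
      Real.rpow_mul (by norm_num), Real.rpow_natCast]
  rw [hrhs]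
  have hpow : ((2:ℝ) ^ m) ^ d ≤ u ^ d :=
    pow_le_pow_left₀ (Real.rpow_nonneg (by norm_num) m) hmu d
  have hcb : Real.exp ((d:ℝ) * s) / 2 ≤ Real.cosh ((d:ℝ) * s) := by
    rw [Real.cosh_eq]
    have := Real.exp_pos (-((d:ℝ) * s))
    linarith
  have hexp : Real.exp ((d:ℝ) * s) = u ^ d := by
    rw [Real.exp_nat_mul, hes]
  show ((2:ℝ) ^ m) ^ d / 2 ≤ Real.cosh ((d:ℝ) * s)
  calc ((2:ℝ) ^ m) ^ d / 2 ≤ u ^ d / 2 := by linarith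
    _ = Real.exp ((d:ℝ) * s) / 2 := by rw [hexp]
    _ ≤ Real.cosh ((d:ℝ) * s) := hcb
end

section
/- Let T be a firmly nonexpansive operator on a real Hilbert space and let a sequence satisfy Z^{k+1} = T(Z^k) + E^k with errors E^k. Define W^k = T(Z^k) − Z^k. Then for every k, ‖W^{k+1}‖² ≤ ‖W^k‖² + ‖E^k‖². -/
/-- Let `T` be firmly nonexpansive on a real Hilbert space and let
`Z^{k+1} = T(Z^k) + E^k`. With `W^k = T(Z^k) − Z^k`, for every `k`,
`‖W^{k+1}‖² ≤ ‖W^k‖² + ‖E^k‖²`. -/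
theorem inexact_fixed_point_residual_bound {H : Type*} [NormedAddCommGroup H]
    [InnerProductSpace ℝ H] (T : H → H)
    (hT : ∀ x y : H, ‖T x - T y‖ ^ 2 ≤ inner ℝ (T x - T y) (x - y))
    (Z E : ℕ → H) (hZ : ∀ k, Z (k + 1) = T (Z k) + E k) :
    ∀ k, ‖T (Z (k + 1)) - Z (k + 1)‖ ^ 2 ≤ ‖T (Z k) - Z k‖ ^ 2 + ‖E k‖ ^ 2 := by
  intro k
  set x := Z (k + 1) with hx
  set y := Z k with hy
  have hxe : x = T y + E k := hZ k
  set a : H := T x - x with ha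
  set w : H := T y - y with hw
  set e : H := E k with he
  have h1 : ‖T x - T y‖ ^ 2 ≤ inner ℝ (T x - T y) (x - y) := hT x y
  have hae : T x - T y = a + e := by rw [ha, hxe]; abel
  have hwe : x - y = w + e := by rw [hw, hxe]; abel
  rw [hae, hwe] at h1
  have h2 : (0:ℝ) ≤ ‖a - w + e‖ ^ 2 := sq_nonneg _
  have expand : ∀ v : H, ‖v‖ ^ 2 = inner ℝ v v := fun v =>
    (real_inner_self_eq_norm_sq v).symm
  rw [expand] at h1 h2 ⊢
  rw [expand, expand]
  simp only [inner_add_left, inner_add_right, inner_sub_left, inner_sub_right] at h1 h2 ⊢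
  have c1 : (inner ℝ e a : ℝ) = inner ℝ a e := real_inner_comm a e
  have c2 : (inner ℝ e w : ℝ) = inner ℝ w e := real_inner_comm w e
  have c3 : (inner ℝ w a : ℝ) = inner ℝ a w := real_inner_comm a w
  nlinarith [h1, h2]
end

section
/- Let h = F + R with F convex differentiable with L-Lipschitz gradient and R convex, let x* minimize h, and let x⁺ = prox_{τR}(x − τ(∇F(x) + e)) with 0 < τ ≤ 1/L. Then h(x⁺) − h(x*) ≤ (1/(2τ))(‖x − x*‖² − ‖x⁺ − x*‖²) + ‖e‖ · ‖x⁺ − x*‖. -/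
local notation "⟪" x ", " y "⟫" => @inner ℝ _ _ x y

variable {E : Type*} [NormedAddCommGroup E] [InnerProductSpace ℝ E] [CompleteSpace E]

lemma line_hasDerivAt (F : E → ℝ) (g x d : E) (t : ℝ)
    (h : HasGradientAt F g (x + t • d)) :
    HasDerivAt (fun s : ℝ => F (x + s • d)) ⟪g, d⟫ t := by
  have hline : HasDerivAt (fun s : ℝ => x + s • d) d t := by
    simpa using ((hasDerivAt_id t).smul_const d).const_add x
  have := (hasGradientAt_iff_hasFDerivAt.mp h).comp_hasDerivAt t hline
  simpa [InnerProductSpace.toDual_apply_apply, Function.comp_def] using this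

lemma convex_grad_ineq (F : E → ℝ) (F' : E → E) (hFconv : ConvexOn ℝ Set.univ F)
    (hgrad : ∀ y, HasGradientAt F (F' y) y) (x y : E) :
    F x + ⟪F' x, y - x⟫ ≤ F y := by
  set g : ℝ → ℝ := fun t => F (x + t • (y - x)) with hg
  have hconv : ConvexOn ℝ Set.univ g := by
    have h := hFconv.comp_affineMap (AffineMap.lineMap x y : ℝ →ᵃ[ℝ] E)
    have heq : g = F ∘ (AffineMap.lineMap x y : ℝ →ᵃ[ℝ] E) := by
      funext t
      simp [g, Function.comp, AffineMap.lineMap_apply, add_comm]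
    rw [heq]
    simpa using h
  have hderiv : HasDerivAt g ⟪F' x, y - x⟫ 0 := by
    have := line_hasDerivAt F (F' (x + (0:ℝ) • (y - x))) x (y - x) 0 (hgrad _)
    simpa using this
  have hslope := hconv.le_slope_of_hasDerivAt (Set.mem_univ (0:ℝ)) (Set.mem_univ (1:ℝ))
    zero_lt_one hderiv
  have : slope g 0 1 = F y - F x := by
    simp [slope_def_field, g]
  rw [this] at hslope
  linarith

lemma descent_lemma (F : E → ℝ) (F' : E → E)
    (hgrad : ∀ y, HasGradientAt F (F' y) y)
    (L : ℝ) (hL : 0 ≤ L) (hLip : ∀ x y, ‖F' x - F' y‖ ≤ L * ‖x - y‖) (x y : E) :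
    F y ≤ F x + ⟪F' x, y - x⟫ + L / 2 * ‖y - x‖ ^ 2 := by
  set d := y - x with hd
  set K := L / 2 * ‖d‖ ^ 2 with hK
  set φ : ℝ → ℝ := fun t => F (x + t • d) - t * ⟪F' x, d⟫ - t ^ 2 * K with hφ
  have hφd : ∀ t : ℝ, HasDerivAt φ (⟪F' (x + t • d), d⟫ - ⟪F' x, d⟫ - 2 * t * K) t := by
    intro t
    have h1 := line_hasDerivAt F (F' (x + t • d)) x d t (hgrad _)
    have h2 : HasDerivAt (fun s : ℝ => s * ⟪F' x, d⟫) ⟪F' x, d⟫ t := by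
      simpa using (hasDerivAt_id t).mul_const (⟪F' x, d⟫)
    have h3 : HasDerivAt (fun s : ℝ => s ^ 2 * K) (2 * t * K) t := by
      simpa [mul_comm] using (hasDerivAt_pow 2 t).mul_const K
    exact (h1.sub h2).sub h3
  have hcont : ContinuousOn φ (Set.Icc 0 1) :=
    (fun t _ => ((hφd t).differentiableAt).continuousAt.continuousWithinAt)
  have hdiff : DifferentiableOn ℝ φ (interior (Set.Icc (0:ℝ) 1)) :=
    fun t _ => ((hφd t).differentiableAt).differentiableWithinAt
  have hanti : AntitoneOn φ (Set.Icc 0 1) := by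
    refine antitoneOn_of_deriv_nonpos (convex_Icc 0 1) hcont hdiff ?_
    intro t ht
    rw [interior_Icc] at ht
    rw [(hφd t).deriv]
    have hbound : ⟪F' (x + t • d) - F' x, d⟫ ≤ L * (t * ‖d‖) * ‖d‖ := by
      calc ⟪F' (x + t • d) - F' x, d⟫ ≤ ‖F' (x + t • d) - F' x‖ * ‖d‖ :=
            real_inner_le_norm _ _
        _ ≤ (L * ‖(x + t • d) - x‖) * ‖d‖ := by
            have := hLip (x + t • d) x
            nlinarith [norm_nonneg d]
        _ = L * (t * ‖d‖) * ‖d‖ := by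
            rw [add_sub_cancel_left, norm_smul, Real.norm_eq_abs, abs_of_pos ht.1]
    have hin : ⟪F' (x + t • d) - F' x, d⟫ = ⟪F' (x + t • d), d⟫ - ⟪F' x, d⟫ :=
      inner_sub_left _ _ _
    rw [hin] at hbound
    have : L * (t * ‖d‖) * ‖d‖ = 2 * t * K := by rw [hK]; ring
    linarith [hbound, this.le]
  have h01 := hanti (Set.mem_Icc.mpr ⟨le_refl 0, zero_le_one⟩)
    (Set.mem_Icc.mpr ⟨zero_le_one, le_refl 1⟩) zero_le_one
  have h0 : φ 0 = F x := by simp [hφ]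
  have h1 : φ 1 = F y - ⟪F' x, d⟫ - K := by
    simp [hφ, hd]
  rw [h0, h1] at h01
  rw [hK] at h01
  linarith

set_option maxHeartbeats 1000000 in
/-- Let `h = F + R` with `F` convex differentiable with `L`-Lipschitz gradient and `R`
convex, let `x*` minimize `h`, and let `x⁺ = prox_{τR}(x − τ(∇F(x) + e))` with
`0 < τ ≤ 1/L`. Then
`h(x⁺) − h(x*) ≤ (1/(2τ))(‖x − x*‖² − ‖x⁺ − x*‖²) + ‖e‖·‖x⁺ − x*‖`. -/
theorem inexact_prox_grad_descent_bound {n : ℕ}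
    (F R : EuclideanSpace ℝ (Fin n) → ℝ) (F' : EuclideanSpace ℝ (Fin n) → EuclideanSpace ℝ (Fin n))
    (hFconv : ConvexOn ℝ Set.univ F) (hRconv : ConvexOn ℝ Set.univ R)
    (hgrad : ∀ x, HasGradientAt F (F' x) x)
    (L : ℝ) (hL : 0 < L) (hLip : ∀ x y, ‖F' x - F' y‖ ≤ L * ‖x - y‖)
    (xs : EuclideanSpace ℝ (Fin n)) (hmin : ∀ y, F xs + R xs ≤ F y + R y)
    (τ : ℝ) (hτ0 : 0 < τ) (hτL : τ ≤ 1 / L)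
    (x e xplus : EuclideanSpace ℝ (Fin n))
    (hprox : ∀ u, R xplus + (1 / (2 * τ)) * ‖xplus - (x - τ • (F' x + e))‖ ^ 2 ≤
      R u + (1 / (2 * τ)) * ‖u - (x - τ • (F' x + e))‖ ^ 2) :
    (F xplus + R xplus) - (F xs + R xs) ≤
      (1 / (2 * τ)) * (‖x - xs‖ ^ 2 - ‖xplus - xs‖ ^ 2) + ‖e‖ * ‖xplus - xs‖ := by
  set z := x - τ • (F' x + e) with hz
  set w := xs - xplus with hw
  set a := xplus - z with ha
  set c := 1 / (2 * τ) with hc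
  have hcpos : 0 < c := by positivity
  -- prox subgradient inequality at xs
  have hsub : R xplus ≤ R xs + 2 * c * ⟪a, w⟫ := by
    refine le_of_forall_pos_le_add ?_
    intro ε hε
    set t : ℝ := min 1 (ε / (c * ‖w‖ ^ 2 + 1)) with ht
    have ht0 : 0 < t := lt_min one_pos (by positivity)
    have ht1 : t ≤ 1 := min_le_left _ _
    have hconv : R (xplus + t • w) ≤ (1 - t) * R xplus + t * R xs := by
      have hpt : (1 - t) • xplus + t • xs = xplus + t • w := by
        rw [hw]; module
      have := hRconv.2 (Set.mem_univ xplus) (Set.mem_univ xs)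
        (by linarith : (0:ℝ) ≤ 1 - t) ht0.le (by ring)
      rwa [hpt] at this
    have hnorm : ‖xplus + t • w - z‖ ^ 2 = ‖a‖ ^ 2 + 2 * (t * ⟪a, w⟫) + t ^ 2 * ‖w‖ ^ 2 := by
      have h1 : xplus + t • w - z = a + t • w := by rw [ha]; module
      rw [h1, norm_add_sq_real, real_inner_smul_right, norm_smul, Real.norm_eq_abs,
        abs_of_pos ht0, mul_pow]
    have hp := hprox (xplus + t • w)
    rw [hnorm] at hp
    -- hp : R xplus + c * ‖a‖^2 ≤ R (xplus+t•w) + c * (‖a‖^2 + 2 t ⟪a,w⟫ + t²‖w‖²)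
    have key : t * R xplus ≤ t * R xs + 2 * c * (t * ⟪a, w⟫) + c * t ^ 2 * ‖w‖ ^ 2 := by
      nlinarith [hp, hconv]
    have hdiv : R xplus ≤ R xs + 2 * c * ⟪a, w⟫ + c * t * ‖w‖ ^ 2 := by
      have := mul_le_mul_of_nonneg_left key (le_of_lt (inv_pos.mpr ht0))
      have h2 : t⁻¹ * t = 1 := inv_mul_cancel₀ (ne_of_gt ht0)
      nlinarith [key, ht0, sq_nonneg t]
    have htb : c * t * ‖w‖ ^ 2 ≤ ε := by
      have h3 : t ≤ ε / (c * ‖w‖ ^ 2 + 1) := min_le_right _ _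
      have h4 : 0 < c * ‖w‖ ^ 2 + 1 := by positivity
      rw [div_eq_mul_inv] at h3
      have h5 : t * (c * ‖w‖ ^ 2 + 1) ≤ ε := by
        calc t * (c * ‖w‖ ^ 2 + 1) ≤ (ε * (c * ‖w‖ ^ 2 + 1)⁻¹) * (c * ‖w‖ ^ 2 + 1) := by
              nlinarith
          _ = ε := by field_simp
      nlinarith [ht0.le, sq_nonneg ‖w‖, hcpos.le]
    linarith
  -- descent lemma
  have hdesc : F xplus ≤ F x + ⟪F' x, xplus - x⟫ + c * ‖xplus - x‖ ^ 2 := by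
    have := descent_lemma F F' hgrad L hL.le hLip x xplus
    have hLτ : τ * L ≤ 1 := by rwa [le_div_iff₀ hL] at hτL
    have hLc : L / 2 ≤ c := by
      rw [hc, div_le_div_iff₀ two_pos (by positivity)]
      nlinarith
    nlinarith [sq_nonneg ‖xplus - x‖]
  -- convexity of F at x vs xs
  have hconvF : F x + ⟪F' x, xs - x⟫ ≤ F xs := convex_grad_ineq F F' hFconv hgrad x xs
  -- expand ⟪a, w⟫
  have hax : ⟪a, w⟫ = ⟪xplus - x, w⟫ + τ * ⟪F' x, w⟫ + τ * ⟪e, w⟫ := by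
    have h1 : a = (xplus - x) + τ • (F' x + e) := by rw [ha, hz]; module
    rw [h1, inner_add_left, real_inner_smul_left, inner_add_left]
    ring
  -- gradient terms cancel
  have hcancel : ⟪F' x, xplus - x⟫ + ⟪F' x, w⟫ = ⟪F' x, xs - x⟫ := by
    rw [← inner_add_right]
    congr 1
    rw [hw]; module
  -- norm identity
  have hid : ‖x - xs‖ ^ 2 = ‖xplus - x‖ ^ 2 + 2 * ⟪xplus - x, w⟫ + ‖xplus - xs‖ ^ 2 := by
    have h1 : x - xs = (x - xplus) + (xplus - xs) := by module
    rw [h1, norm_add_sq_real]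
    have h2 : ⟪x - xplus, xplus - xs⟫ = ⟪xplus - x, w⟫ := by
      rw [hw, show x - xplus = -(xplus - x) by module, show xplus - xs = -(xs - xplus) by module,
        inner_neg_neg]
    rw [h2, norm_sub_rev x xplus]
  -- Cauchy-Schwarz for e
  have hCS : ⟪e, w⟫ ≤ ‖e‖ * ‖xplus - xs‖ := by
    calc ⟪e, w⟫ ≤ ‖e‖ * ‖w‖ := real_inner_le_norm _ _
      _ = ‖e‖ * ‖xplus - xs‖ := by rw [hw, norm_sub_rev]
  -- 2 c τ = 1
  have hcτ : 2 * c * τ = 1 := by rw [hc]; field_simp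
  -- combine
  have hgoal : ‖x - xs‖ ^ 2 - ‖xplus - xs‖ ^ 2 = ‖xplus - x‖ ^ 2 + 2 * ⟪xplus - x, w⟫ := by
    linarith
  have hexp : 2 * c * ⟪a, w⟫ = 2 * c * ⟪xplus - x, w⟫ + 2 * c * τ * ⟪F' x, w⟫ +
      2 * c * τ * ⟪e, w⟫ := by rw [hax]; ring
  rw [hcτ, one_mul, one_mul] at hexp
  rw [hgoal]
  linarith [hsub, hexp, hdesc, hconvF, hcancel, hCS]
end
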